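/- arXiv:2408.11171 — 2 statements merged into one kernel-verified Lean document; each statement's English description precedes it below -/
import Mathlib

section
/- Let μ > 0, a > 0, b > 0 and θ ∈ ℝ. Let (g_k)_{k≥0} be a sequence of real numbers and suppose that for every k ≥ 1 there exist functions e₁ᵏ, φ₁ᵏ (twice continuously differentiable on [−a, 0], satisfying f'' = μ²·f on [−a, 0] and f(−a) = 0) and e₂ᵏ, φ₂ᵏ (twice continuously differentiable on [0, b], satisfying f'' = μ²·f on [0, b] and f(b) = 0) such that e₁ᵏ(0) = g_{k−1}, e₂ᵏ(0) = g_{k−1}, (φ₁ᵏ)'(0) = (e₁ᵏ)'(0) − (e₂ᵏ)'(0), (φ₂ᵏ)'(0) = (e₂ᵏ)'(0) − (e₁ᵏ)'(0) (one-sided derivatives at 0), and g_k = g_{k−1} − θ·(φ₁ᵏ(0) + φ₂ᵏ(0)). Then g_k = (1 − θ·(2 + tanh(μa)/tanh(μb) + tanh(μb)/tanh(μa)))ᵏ·g_0 for all k ≥ 0. -/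
open Set Filter

lemma wronskian_const (μ c d : ℝ) (hcd : c < d) (f s s' : ℝ → ℝ)
    (hf : ContDiffOn ℝ 2 f (Icc c d))
    (hode : ∀ x ∈ Icc c d,
      derivWithin (derivWithin f (Icc c d)) (Icc c d) x = μ ^ 2 * f x)
    (hs : ∀ x, HasDerivAt s (s' x) x)
    (hs' : ∀ x, HasDerivAt s' (μ ^ 2 * s x) x) :
    f d * s' d - derivWithin f (Icc c d) d * s d
      = f c * s' c - derivWithin f (Icc c d) c * s c := by
  set S := Icc c d with hS
  have hu : UniqueDiffOn ℝ S := uniqueDiffOn_Icc hcd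
  have hf1 : DifferentiableOn ℝ f S := hf.differentiableOn (by norm_num)
  have hf'd : DifferentiableOn ℝ (derivWithin f S) S :=
    ((hf.derivWithin hu (by norm_num : (1:WithTop ℕ∞) + 1 ≤ 2)).differentiableOn one_ne_zero)
  set W : ℝ → ℝ := fun x => f x * s' x - derivWithin f S x * s x with hW
  have key : ∀ x ∈ S, HasDerivWithinAt W 0 S x := by
    intro x hx
    have h1 : HasDerivWithinAt f (derivWithin f S x) S x :=
      (hf1 x hx).hasDerivWithinAt
    have h2 : HasDerivWithinAt (derivWithin f S) (μ ^ 2 * f x) S x := by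
      have := (hf'd x hx).hasDerivWithinAt
      rwa [hode x hx] at this
    have h3 := (hs x).hasDerivWithinAt (s := S)
    have h4 := (hs' x).hasDerivWithinAt (s := S)
    have := (h1.mul h4).sub (h2.mul h3)
    refine this.congr_deriv ?_
    ring
  have hdiff : DifferentiableOn ℝ W S := fun x hx => (key x hx).differentiableWithinAt
  have hzero : ∀ x ∈ Ico c d, derivWithin W S x = 0 := fun x hx =>
    (key x (Ico_subset_Icc_self hx)).derivWithin (hu x (Ico_subset_Icc_self hx))
  have := constant_of_derivWithin_zero hdiff hzero d (right_mem_Icc.2 hcd.le)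
  exact this

lemma ode_left (μ a : ℝ) (ha : 0 < a) (f : ℝ → ℝ)
    (hf : ContDiffOn ℝ 2 f (Icc (-a) 0))
    (hode : ∀ x ∈ Icc (-a) 0,
      derivWithin (derivWithin f (Icc (-a) 0)) (Icc (-a) 0) x = μ ^ 2 * f x)
    (h0 : f (-a) = 0) :
    f 0 * (μ * Real.cosh (μ * a)) = derivWithin f (Icc (-a) 0) 0 * Real.sinh (μ * a) := by
  have hin : ∀ x : ℝ, HasDerivAt (fun y => μ * (y + a)) μ x := by
    intro x
    simpa using ((hasDerivAt_id x).add_const a).const_mul μ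
  have hs : ∀ x : ℝ, HasDerivAt (fun y => Real.sinh (μ * (y + a)))
      (μ * Real.cosh (μ * (x + a))) x := by
    intro x
    simpa [mul_comm] using (hin x).sinh
  have hs' : ∀ x : ℝ, HasDerivAt (fun y => μ * Real.cosh (μ * (y + a)))
      (μ ^ 2 * Real.sinh (μ * (x + a))) x := by
    intro x
    have := ((hin x).cosh).const_mul μ
    refine this.congr_deriv ?_
    ring
  have key := wronskian_const μ (-a) 0 (by linarith) f _ _ hf hode hs hs'
  simp only [zero_add, neg_add_cancel, mul_zero, Real.sinh_zero, Real.cosh_zero, h0] at key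
  linarith [key]

lemma ode_right (μ b : ℝ) (hb : 0 < b) (f : ℝ → ℝ)
    (hf : ContDiffOn ℝ 2 f (Icc 0 b))
    (hode : ∀ x ∈ Icc 0 b,
      derivWithin (derivWithin f (Icc 0 b)) (Icc 0 b) x = μ ^ 2 * f x)
    (h0 : f b = 0) :
    f 0 * (μ * Real.cosh (μ * b)) = -(derivWithin f (Icc 0 b) 0 * Real.sinh (μ * b)) := by
  have hin : ∀ x : ℝ, HasDerivAt (fun y => μ * (b - y)) (-μ) x := by
    intro x
    simpa using ((hasDerivAt_id x).const_sub b).const_mul μ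
  have hs : ∀ x : ℝ, HasDerivAt (fun y => Real.sinh (μ * (b - y)))
      (-(μ * Real.cosh (μ * (b - x)))) x := by
    intro x
    have := (hin x).sinh
    convert this using 1
    ring
  have hs' : ∀ x : ℝ, HasDerivAt (fun y => -(μ * Real.cosh (μ * (b - y))))
      (μ ^ 2 * Real.sinh (μ * (b - x))) x := by
    intro x
    have := (((hin x).cosh).const_mul μ).neg
    refine this.congr_deriv ?_
    ring
  have key := wronskian_const μ 0 b hb f _ _ hf hode hs hs'
  simp only [sub_self, sub_zero, mul_zero, Real.sinh_zero, Real.cosh_zero, h0] at key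
  linarith [key]

theorem nnwr_bounded_recurrence
    (μ a b θ : ℝ) (hμ : 0 < μ) (ha : 0 < a) (hb : 0 < b)
    (g : ℕ → ℝ)
    (hiter : ∀ k : ℕ, ∃ e₁ φ₁ e₂ φ₂ : ℝ → ℝ,
      ContDiffOn ℝ 2 e₁ (Icc (-a) 0) ∧
      (∀ x ∈ Icc (-a) 0,
        derivWithin (derivWithin e₁ (Icc (-a) 0)) (Icc (-a) 0) x = μ ^ 2 * e₁ x) ∧
      e₁ (-a) = 0 ∧
      ContDiffOn ℝ 2 φ₁ (Icc (-a) 0) ∧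
      (∀ x ∈ Icc (-a) 0,
        derivWithin (derivWithin φ₁ (Icc (-a) 0)) (Icc (-a) 0) x = μ ^ 2 * φ₁ x) ∧
      φ₁ (-a) = 0 ∧
      ContDiffOn ℝ 2 e₂ (Icc 0 b) ∧
      (∀ x ∈ Icc 0 b,
        derivWithin (derivWithin e₂ (Icc 0 b)) (Icc 0 b) x = μ ^ 2 * e₂ x) ∧
      e₂ b = 0 ∧
      ContDiffOn ℝ 2 φ₂ (Icc 0 b) ∧
      (∀ x ∈ Icc 0 b,
        derivWithin (derivWithin φ₂ (Icc 0 b)) (Icc 0 b) x = μ ^ 2 * φ₂ x) ∧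
      φ₂ b = 0 ∧
      e₁ 0 = g k ∧ e₂ 0 = g k ∧
      derivWithin φ₁ (Icc (-a) 0) 0
        = derivWithin e₁ (Icc (-a) 0) 0 - derivWithin e₂ (Icc 0 b) 0 ∧
      derivWithin φ₂ (Icc 0 b) 0
        = derivWithin e₂ (Icc 0 b) 0 - derivWithin e₁ (Icc (-a) 0) 0 ∧
      g (k + 1) = g k - θ * (φ₁ 0 + φ₂ 0)) :
    ∀ k : ℕ, g k
      = (1 - θ * (2 + Real.tanh (μ * a) / Real.tanh (μ * b)
          + Real.tanh (μ * b) / Real.tanh (μ * a))) ^ k * g 0 := by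
  have hsa : 0 < Real.sinh (μ * a) := Real.sinh_pos_iff.2 (by positivity)
  have hsb : 0 < Real.sinh (μ * b) := Real.sinh_pos_iff.2 (by positivity)
  have hca : 0 < Real.cosh (μ * a) := Real.cosh_pos _
  have hcb : 0 < Real.cosh (μ * b) := Real.cosh_pos _
  set sa := Real.sinh (μ * a); set ca := Real.cosh (μ * a)
  set sb := Real.sinh (μ * b); set cb := Real.cosh (μ * b)
  set r : ℝ := 1 - θ * (2 + Real.tanh (μ * a) / Real.tanh (μ * b)
      + Real.tanh (μ * b) / Real.tanh (μ * a)) with hr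
  intro k
  induction k with
  | zero => simp
  | succ k ih =>
    obtain ⟨e₁, φ₁, e₂, φ₂, he₁s, he₁o, he₁0, hφ₁s, hφ₁o, hφ₁0, he₂s, he₂o, he₂b,
      hφ₂s, hφ₂o, hφ₂b, he₁g, he₂g, hd₁, hd₂, hupd⟩ := hiter k
    set A := derivWithin e₁ (Icc (-a) 0) 0 with hA
    set B := derivWithin e₂ (Icc 0 b) 0 with hB
    have E1 : g k * (μ * ca) = A * sa := by
      have := ode_left μ a ha e₁ he₁s he₁o he₁0
      rwa [he₁g] at this
    have E2 : g k * (μ * cb) = -(B * sb) := by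
      have := ode_right μ b hb e₂ he₂s he₂o he₂b
      rwa [he₂g] at this
    have E3 : φ₁ 0 * (μ * ca) = (A - B) * sa := by
      have := ode_left μ a ha φ₁ hφ₁s hφ₁o hφ₁0
      rwa [hd₁] at this
    have E4 : φ₂ 0 * (μ * cb) = -((B - A) * sb) := by
      have := ode_right μ b hb φ₂ hφ₂s hφ₂o hφ₂b
      rwa [hd₂] at this
    have hsum : φ₁ 0 + φ₂ 0
        = g k * (2 + Real.tanh (μ * a) / Real.tanh (μ * b)
            + Real.tanh (μ * b) / Real.tanh (μ * a)) := by
      have hA' : A = g k * (μ * ca) / sa := (eq_div_iff hsa.ne').2 E1.symm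
      have hB' : B = -(g k * (μ * cb)) / sb := (eq_div_iff hsb.ne').2 (by linarith [E2])
      have h1 : φ₁ 0 = (A - B) * sa / (μ * ca) := (eq_div_iff (mul_pos hμ hca).ne').2 E3
      have h2 : φ₂ 0 = -((B - A) * sb) / (μ * cb) := (eq_div_iff (mul_pos hμ hcb).ne').2 E4
      rw [Real.tanh_eq_sinh_div_cosh, Real.tanh_eq_sinh_div_cosh, h1, h2, hA', hB']
      field_simp
      ring
    rw [hupd, hsum, ih, hr]
    ring
end

section
/- Let μ₀ > 0, c, r, d, τ, θ ∈ ℝ, a > 0, b > 0, and let s ∈ ℝ be such that s − r − d·e^{−τs} > 0. Set κ := (s − r − d·e^{−τs}) / (μ₀²·(1 + c²·e^{−τs})) (note 1 + c²e^{−τs} > 0 for real s) and μ̂ := √κ. Let (g_k)_{k≥0} be a sequence of real numbers and suppose that for every k ≥ 1 there exist functions e₁ᵏ, φ₁ᵏ (twice continuously differentiable on [−a, 0], satisfying μ₀²·(1 + c²e^{−τs})·f'' = (s − r − de^{−τs})·f on [−a, 0] and f(−a) = 0) and e₂ᵏ, φ₂ᵏ (twice continuously differentiable on [0, b], satisfying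 the same ODE on [0, b] and f(b) = 0) such that e₁ᵏ(0) = g_{k−1}, e₂ᵏ(0) = g_{k−1}, (φ₁ᵏ)'(0) = (e₁ᵏ)'(0) − (e₂ᵏ)'(0), (φ₂ᵏ)'(0) = (e₂ᵏ)'(0) − (e₁ᵏ)'(0), and g_k = g_{k−1} − θ·(φ₁ᵏ(0) + φ₂ᵏ(0)). Then g_k = (1 − θ·(2 + coth(μ̂a)/coth(μ̂b) + coth(μ̂b)/coth(μ̂a)))ᵏ·g_0 for all k ≥ 0. In particular, for equal subdomains a = b one has g_k = (1 − 4θ)ᵏ·g_0; hence if θ = 1/4 then g_k = 0 for all k ≥ 1, and if 0 < θ < 1/2 then |g_k| ≤ |1 − 4θ|ᵏ·|g_0| and g_k → 0 as k → ∞. -/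
open Set Filter

/-- The hyperbolic cotangent. -/
noncomputable def coth (x : ℝ) : ℝ := Real.cosh x / Real.sinh x


lemma wronskian_const_s16 {l u κ : ℝ} (hlu : l < u) {f G G' : ℝ → ℝ}
    (hf : ContDiffOn ℝ 2 f (Icc l u))
    (hode : ∀ x ∈ Icc l u,
      derivWithin (derivWithin f (Icc l u)) (Icc l u) x = κ * f x)
    (hG : ∀ x, HasDerivAt G (G' x) x)
    (hG' : ∀ x, HasDerivAt G' (κ * G x) x) :
    ∀ x ∈ Icc l u,
      derivWithin f (Icc l u) x * G x - f x * G' x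
        = derivWithin f (Icc l u) l * G l - f l * G' l := by
  have hUD : UniqueDiffOn ℝ (Icc l u) := uniqueDiffOn_Icc hlu
  have hfd : DifferentiableOn ℝ f (Icc l u) := hf.differentiableOn two_ne_zero
  have hf' : ContDiffOn ℝ 1 (derivWithin f (Icc l u)) (Icc l u) :=
    hf.derivWithin hUD le_rfl
  have hf'd : DifferentiableOn ℝ (derivWithin f (Icc l u)) (Icc l u) :=
    hf'.differentiableOn one_ne_zero
  have hGc : Continuous G := (Differentiable.continuous fun x => (hG x).differentiableAt)
  have hG'c : Continuous G' := (Differentiable.continuous fun x => (hG' x).differentiableAt)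
  have hcont : ContinuousOn
      (fun x => derivWithin f (Icc l u) x * G x - f x * G' x) (Icc l u) :=
    ((hf'.continuousOn.mul hGc.continuousOn).sub
      (hf.continuousOn.mul hG'c.continuousOn))
  have hderiv : ∀ x ∈ Ico l u,
      HasDerivWithinAt (fun x => derivWithin f (Icc l u) x * G x - f x * G' x)
        0 (Ici x) x := by
    intro x hx
    have hxI : x ∈ Icc l u := Ico_subset_Icc_self hx
    have h1 : HasDerivWithinAt f (derivWithin f (Icc l u) x) (Icc l u) x :=
      (hfd x hxI).hasDerivWithinAt
    have h2 : HasDerivWithinAt (derivWithin f (Icc l u)) (κ * f x) (Icc l u) x := by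
      have h := (hf'd x hxI).hasDerivWithinAt
      rwa [hode x hxI] at h
    have hW : HasDerivWithinAt
        (fun x => derivWithin f (Icc l u) x * G x - f x * G' x) 0 (Icc l u) x := by
      have h := (h2.mul (hG x).hasDerivWithinAt).sub
        (h1.mul (hG' x).hasDerivWithinAt)
      refine h.congr_deriv ?_
      ring
    exact hW.mono_of_mem_nhdsWithin (Icc_mem_nhdsGE_of_mem hx)
  exact constant_of_has_deriv_right_zero hcont hderiv

lemma bc_left {l u κ m : ℝ} (hlu : l < u) (hm : m ^ 2 = κ) {f : ℝ → ℝ}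
    (hf : ContDiffOn ℝ 2 f (Icc l u))
    (hode : ∀ x ∈ Icc l u,
      derivWithin (derivWithin f (Icc l u)) (Icc l u) x = κ * f x)
    (h0 : f l = 0) :
    derivWithin f (Icc l u) u * Real.sinh (m * (u - l))
      = m * Real.cosh (m * (u - l)) * f u := by
  have hG : ∀ x : ℝ, HasDerivAt (fun y => Real.sinh (m * (y - l)))
      (m * Real.cosh (m * (x - l))) x := by
    intro x
    have h := (((hasDerivAt_id x).sub_const l).const_mul m).sinh
    simp only [id_eq] at h
    convert h using 1
    ring_nf
  have hG' : ∀ x : ℝ, HasDerivAt (fun y => m * Real.cosh (m * (y - l)))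
      (κ * Real.sinh (m * (x - l))) x := by
    intro x
    have h := ((((hasDerivAt_id x).sub_const l).const_mul m).cosh).const_mul m
    simp only [id_eq] at h
    refine h.congr_deriv ?_
    rw [← hm]
    ring_nf
  have hW := wronskian_const_s16 hlu hf hode hG hG' u (right_mem_Icc.2 hlu.le)
  simp only [sub_self, mul_zero, Real.sinh_zero, h0, zero_mul, sub_zero,
    mul_zero, zero_sub, neg_zero] at hW
  linarith [hW]

lemma bc_right {l u κ m : ℝ} (hlu : l < u) (hm : m ^ 2 = κ) {f : ℝ → ℝ}
    (hf : ContDiffOn ℝ 2 f (Icc l u))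
    (hode : ∀ x ∈ Icc l u,
      derivWithin (derivWithin f (Icc l u)) (Icc l u) x = κ * f x)
    (h0 : f u = 0) :
    derivWithin f (Icc l u) l * Real.sinh (m * (u - l))
      = -(m * Real.cosh (m * (u - l)) * f l) := by
  have hG : ∀ x : ℝ, HasDerivAt (fun y => Real.sinh (m * (u - y)))
      (-(m * Real.cosh (m * (u - x)))) x := by
    intro x
    have h := (((hasDerivAt_id x).const_sub u).const_mul m).sinh
    simp only [id_eq] at h
    convert h using 1
    ring_nf
  have hG' : ∀ x : ℝ, HasDerivAt (fun y => -(m * Real.cosh (m * (u - y))))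
      (κ * Real.sinh (m * (u - x))) x := by
    intro x
    have h := (((((hasDerivAt_id x).const_sub u).const_mul m).cosh).const_mul m).neg
    simp only [id_eq] at h
    refine h.congr_deriv ?_
    rw [← hm]
    ring_nf
  have hW := wronskian_const_s16 hlu hf hode hG hG' u (right_mem_Icc.2 hlu.le)
  simp only [sub_self, mul_zero, Real.sinh_zero, h0, zero_mul, sub_zero,
    mul_zero, zero_sub] at hW
  linarith [hW]

theorem nnwr_neutral_pde_convergence
    (μ₀ c r d τ θ a b s : ℝ) (hμ₀ : 0 < μ₀) (ha : 0 < a) (hb : 0 < b)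
    (hσ : 0 < s - r - d * Real.exp (-τ * s))
    (μ : ℝ)
    (hμ : μ = Real.sqrt ((s - r - d * Real.exp (-τ * s))
      / (μ₀ ^ 2 * (1 + c ^ 2 * Real.exp (-τ * s)))))
    (g : ℕ → ℝ)
    (hiter : ∀ k : ℕ, ∃ e₁ φ₁ e₂ φ₂ : ℝ → ℝ,
      ContDiffOn ℝ 2 e₁ (Icc (-a) 0) ∧
      (∀ x ∈ Icc (-a) 0,
        μ₀ ^ 2 * (1 + c ^ 2 * Real.exp (-τ * s))
            * derivWithin (derivWithin e₁ (Icc (-a) 0)) (Icc (-a) 0) x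
          = (s - r - d * Real.exp (-τ * s)) * e₁ x) ∧
      e₁ (-a) = 0 ∧
      ContDiffOn ℝ 2 φ₁ (Icc (-a) 0) ∧
      (∀ x ∈ Icc (-a) 0,
        μ₀ ^ 2 * (1 + c ^ 2 * Real.exp (-τ * s))
            * derivWithin (derivWithin φ₁ (Icc (-a) 0)) (Icc (-a) 0) x
          = (s - r - d * Real.exp (-τ * s)) * φ₁ x) ∧
      φ₁ (-a) = 0 ∧
      ContDiffOn ℝ 2 e₂ (Icc 0 b) ∧
      (∀ x ∈ Icc 0 b,
        μ₀ ^ 2 * (1 + c ^ 2 * Real.exp (-τ * s))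
            * derivWithin (derivWithin e₂ (Icc 0 b)) (Icc 0 b) x
          = (s - r - d * Real.exp (-τ * s)) * e₂ x) ∧
      e₂ b = 0 ∧
      ContDiffOn ℝ 2 φ₂ (Icc 0 b) ∧
      (∀ x ∈ Icc 0 b,
        μ₀ ^ 2 * (1 + c ^ 2 * Real.exp (-τ * s))
            * derivWithin (derivWithin φ₂ (Icc 0 b)) (Icc 0 b) x
          = (s - r - d * Real.exp (-τ * s)) * φ₂ x) ∧
      φ₂ b = 0 ∧
      e₁ 0 = g k ∧ e₂ 0 = g k ∧
      derivWithin φ₁ (Icc (-a) 0) 0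
        = derivWithin e₁ (Icc (-a) 0) 0 - derivWithin e₂ (Icc 0 b) 0 ∧
      derivWithin φ₂ (Icc 0 b) 0
        = derivWithin e₂ (Icc 0 b) 0 - derivWithin e₁ (Icc (-a) 0) 0 ∧
      g (k + 1) = g k - θ * (φ₁ 0 + φ₂ 0)) :
    (∀ k : ℕ, g k
        = (1 - θ * (2 + coth (μ * a) / coth (μ * b)
            + coth (μ * b) / coth (μ * a))) ^ k * g 0) ∧
    (a = b →
      (∀ k : ℕ, g k = (1 - 4 * θ) ^ k * g 0) ∧
      (θ = 1 / 4 → ∀ k : ℕ, 1 ≤ k → g k = 0) ∧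
      (0 < θ → θ < 1 / 2 →
        (∀ k : ℕ, |g k| ≤ |1 - 4 * θ| ^ k * |g 0|) ∧
        Tendsto g atTop (nhds 0))) := by
  have hD : 0 < μ₀ ^ 2 * (1 + c ^ 2 * Real.exp (-τ * s)) := by positivity
  have hκ : 0 < (s - r - d * Real.exp (-τ * s))
      / (μ₀ ^ 2 * (1 + c ^ 2 * Real.exp (-τ * s))) := div_pos hσ hD
  have hμ2 : μ ^ 2 = (s - r - d * Real.exp (-τ * s))
      / (μ₀ ^ 2 * (1 + c ^ 2 * Real.exp (-τ * s))) := by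
    rw [hμ]; exact Real.sq_sqrt hκ.le
  have hμpos : 0 < μ := by rw [hμ]; exact Real.sqrt_pos.2 hκ
  have hsa : 0 < Real.sinh (μ * a) := Real.sinh_pos_iff.2 (mul_pos hμpos ha)
  have hsb : 0 < Real.sinh (μ * b) := Real.sinh_pos_iff.2 (mul_pos hμpos hb)
  have hca : 0 < Real.cosh (μ * a) := Real.cosh_pos _
  have hcb : 0 < Real.cosh (μ * b) := Real.cosh_pos _
  have hconv : ∀ (S : Set ℝ) (f : ℝ → ℝ),
      (∀ x ∈ S, μ₀ ^ 2 * (1 + c ^ 2 * Real.exp (-τ * s))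
          * derivWithin (derivWithin f S) S x
        = (s - r - d * Real.exp (-τ * s)) * f x) →
      ∀ x ∈ S, derivWithin (derivWithin f S) S x
        = ((s - r - d * Real.exp (-τ * s))
            / (μ₀ ^ 2 * (1 + c ^ 2 * Real.exp (-τ * s)))) * f x := by
    intro S f h x hx
    rw [div_mul_eq_mul_div, eq_div_iff hD.ne']
    linear_combination h x hx
  have hstep : ∀ k : ℕ, g (k + 1)
      = (1 - θ * (2 + coth (μ * a) / coth (μ * b)
          + coth (μ * b) / coth (μ * a))) * g k := by
    intro k
    obtain ⟨e₁, φ₁, e₂, φ₂, he₁c, he₁o, he₁l, hφ₁c, hφ₁o, hφ₁l, he₂c, he₂o,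
      he₂r, hφ₂c, hφ₂o, hφ₂r, he₁0, he₂0, hφ₁d, hφ₂d, hgk⟩ := hiter k
    have hla : (-a : ℝ) < 0 := by linarith
    have H1 := bc_left hla hμ2 he₁c (hconv _ _ he₁o) he₁l
    have H3 := bc_left hla hμ2 hφ₁c (hconv _ _ hφ₁o) hφ₁l
    have H2 := bc_right hb hμ2 he₂c (hconv _ _ he₂o) he₂r
    have H4 := bc_right hb hμ2 hφ₂c (hconv _ _ hφ₂o) hφ₂r
    simp only [zero_sub, neg_neg, sub_zero] at H1 H2 H3 H4
    rw [he₁0] at H1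
    rw [he₂0] at H2
    rw [hφ₁d] at H3
    rw [hφ₂d] at H4
    set e₁' := derivWithin e₁ (Icc (-a) 0) 0
    set e₂' := derivWithin e₂ (Icc 0 b) 0
    -- P1 : μ ca φ₁0 sb = μ ca gk sb + μ cb gk sa
    have P1 : μ * Real.cosh (μ * a) * φ₁ 0 * Real.sinh (μ * b)
        = μ * Real.cosh (μ * a) * g k * Real.sinh (μ * b)
          + μ * Real.cosh (μ * b) * g k * Real.sinh (μ * a) := by
      linear_combination (-Real.sinh (μ * b)) * H3 + Real.sinh (μ * b) * H1
        - Real.sinh (μ * a) * H2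
    have P2 : μ * Real.cosh (μ * b) * φ₂ 0 * Real.sinh (μ * a)
        = μ * Real.cosh (μ * b) * g k * Real.sinh (μ * a)
          + μ * Real.cosh (μ * a) * g k * Real.sinh (μ * b) := by
      linear_combination Real.sinh (μ * a) * H4 - Real.sinh (μ * a) * H2
        + Real.sinh (μ * b) * H1
    have hφ₁v : φ₁ 0 = (μ * Real.cosh (μ * a) * g k * Real.sinh (μ * b)
        + μ * Real.cosh (μ * b) * g k * Real.sinh (μ * a))
          / (μ * Real.cosh (μ * a) * Real.sinh (μ * b)) := by
      rw [eq_div_iff (by positivity)]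
      linear_combination P1
    have hφ₂v : φ₂ 0 = (μ * Real.cosh (μ * b) * g k * Real.sinh (μ * a)
        + μ * Real.cosh (μ * a) * g k * Real.sinh (μ * b))
          / (μ * Real.cosh (μ * b) * Real.sinh (μ * a)) := by
      rw [eq_div_iff (by positivity)]
      linear_combination P2
    rw [hgk, hφ₁v, hφ₂v]
    simp only [coth]
    field_simp
    ring
  set ρ : ℝ := 1 - θ * (2 + coth (μ * a) / coth (μ * b)
      + coth (μ * b) / coth (μ * a)) with hρ
  have hgen : ∀ k : ℕ, g k = ρ ^ k * g 0 := by
    intro k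
    induction k with
    | zero => simp
    | succ n ih => rw [hstep n, ih, pow_succ]; ring
  refine ⟨hgen, ?_⟩
  intro hab
  subst hab
  have hcoth : 0 < coth (μ * a) := div_pos (Real.cosh_pos _) hsa
  have hρ4 : ρ = 1 - 4 * θ := by
    rw [hρ, div_self hcoth.ne']
    ring
  have hgen4 : ∀ k : ℕ, g k = (1 - 4 * θ) ^ k * g 0 := by
    intro k; rw [hgen k, hρ4]
  refine ⟨hgen4, ?_, ?_⟩
  · intro hθ k hk
    rw [hgen4 k, hθ, show (1 : ℝ) - 4 * (1/4) = 0 by norm_num,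
      zero_pow (by omega : k ≠ 0), zero_mul]
  · intro hθ0 hθ1
    constructor
    · intro k
      rw [hgen4 k, abs_mul, abs_pow]
    · have hlt : |1 - 4 * θ| < 1 := by
        rw [abs_lt]; constructor <;> linarith
      have htend : Tendsto (fun k : ℕ => (1 - 4 * θ) ^ k * g 0) atTop (nhds 0) := by
        have := (tendsto_pow_atTop_nhds_zero_of_abs_lt_one hlt).mul_const (g 0)
        simpa using this
      exact htend.congr fun k => (hgen4 k).symm
end
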